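/- Let H ∈ (0, 1/2). Then there exists a finite constant c_H such that for every integer n ≥ 1, every real δ > 0 with n²δ ≥ 1, and every s > 0: ∫₀^s r^{H−1/2} (r^{H−1/2} − (r+δ)^{H−1/2}) e^{−2n²r} dr ≤ c_H · n^{−4H} · (1 + n²δ). -/

import Mathlib

open Real MeasureTheory intervalIntegral

/-- the bound on `|I_{4,1}|`-type integrals. -/
theorem stmt_17 (H : ℝ) (hH0 : 0 < H) (hH1 : H < 1 / 2) :
    ∃ c : ℝ, ∀ n : ℕ, 1 ≤ n → ∀ δ : ℝ, 0 < δ → 1 ≤ (n : ℝ) ^ 2 * δ → ∀ s : ℝ, 0 < s →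
      (∫ r in (0:ℝ)..s,
          r ^ (H - 1 / 2) * (r ^ (H - 1 / 2) - (r + δ) ^ (H - 1 / 2)) *
            Real.exp (-2 * (n : ℝ) ^ 2 * r)) ≤
        c * (n : ℝ) ^ (-4 * H) * (1 + (n : ℝ) ^ 2 * δ) := by
  refine ⟨Real.Gamma (2 * H) * (1 / 2 : ℝ) ^ (2 * H), fun n hn δ hδ hnδ s hs => ?_⟩
  have hn0 : (0 : ℝ) < (n : ℝ) := by exact_mod_cast hn
  set b : ℝ := 2 * (n : ℝ) ^ 2 with hbdef
  have hb : 0 < b := by positivity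
  have h2H : (0:ℝ) < 2 * H := by linarith
  set g : ℝ → ℝ := fun r => r ^ (2 * H - 1) * Real.exp (-(b * r)) with hgdef
  have hg_int : IntegrableOn g (Set.Ioi 0) := by
    have := integrableOn_rpow_mul_exp_neg_mul_rpow
      (show (-1:ℝ) < 2 * H - 1 by linarith) (zero_lt_one' ℝ) hb
    simpa [hgdef, Real.rpow_one, neg_mul] using this
  set f : ℝ → ℝ := fun r =>
    r ^ (H - 1 / 2) * (r ^ (H - 1 / 2) - (r + δ) ^ (H - 1 / 2)) *
      Real.exp (-2 * (n : ℝ) ^ 2 * r) with hfdef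
  have hfg : ∀ x ∈ Set.Ioc (0:ℝ) s, 0 ≤ f x ∧ f x ≤ g x := by
    intro x hx
    have hx0 : (0:ℝ) < x := hx.1
    have hd : (x + δ) ^ (H - 1 / 2) ≤ x ^ (H - 1 / 2) :=
      Real.rpow_le_rpow_of_nonpos hx0 (by linarith) (by linarith)
    have hnn : (0:ℝ) ≤ (x + δ) ^ (H - 1 / 2) := Real.rpow_nonneg (by linarith) _
    have hxnn : (0:ℝ) ≤ x ^ (H - 1 / 2) := Real.rpow_nonneg hx0.le _
    have hexp : (0:ℝ) ≤ Real.exp (-2 * (n : ℝ) ^ 2 * x) := (Real.exp_pos _).le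
    constructor
    · apply mul_nonneg (mul_nonneg hxnn (by linarith)) hexp
    · have h1 : f x ≤ x ^ (H - 1 / 2) * x ^ (H - 1 / 2) *
          Real.exp (-2 * (n : ℝ) ^ 2 * x) := by
        apply mul_le_mul_of_nonneg_right _ hexp
        apply mul_le_mul_of_nonneg_left (by linarith) hxnn
      have h2 : x ^ (H - 1 / 2) * x ^ (H - 1 / 2) = x ^ (2 * H - 1) := by
        rw [← Real.rpow_add hx0]; ring_nf
      have h3 : (-2 * (n : ℝ) ^ 2 * x) = -(b * x) := by rw [hbdef]; ring
      calc f x ≤ _ := h1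
        _ = g x := by simp only [hgdef]; rw [h2, h3]
  have hg_int' : IntegrableOn g (Set.Ioc 0 s) :=
    hg_int.mono_set Set.Ioc_subset_Ioi_self
  have hf_meas : AEStronglyMeasurable f (volume.restrict (Set.Ioc 0 s)) := by
    apply Measurable.aestronglyMeasurable
    fun_prop
  have hf_int : IntegrableOn f (Set.Ioc 0 s) := by
    refine hg_int'.integrable.mono hf_meas ?_
    filter_upwards [MeasureTheory.ae_restrict_mem measurableSet_Ioc] with x hx
    have := hfg x hx
    rw [Real.norm_eq_abs, Real.norm_eq_abs, abs_of_nonneg this.1,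
      abs_of_nonneg (this.1.trans this.2)]
    exact this.2
  have step1 : (∫ r in (0:ℝ)..s, f r) = ∫ r in Set.Ioc 0 s, f r := by
    rw [intervalIntegral.integral_of_le hs.le]
  have step2 : (∫ r in Set.Ioc 0 s, f r) ≤ ∫ r in Set.Ioc 0 s, g r :=
    setIntegral_mono_on hf_int hg_int' measurableSet_Ioc fun x hx => (hfg x hx).2
  have step3 : (∫ r in Set.Ioc 0 s, g r) ≤ ∫ r in Set.Ioi 0, g r := by
    apply setIntegral_mono_set hg_int
    · filter_upwards [MeasureTheory.ae_restrict_mem measurableSet_Ioi] with x hx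
      have hx0 : (0:ℝ) < x := hx
      positivity
    · exact HasSubset.Subset.eventuallyLE Set.Ioc_subset_Ioi_self
  have step4 : (∫ r in Set.Ioi 0, g r) = (1 / b) ^ (2 * H) * Real.Gamma (2 * H) := by
    have := integral_rpow_mul_exp_neg_mul_Ioi h2H hb
    simpa [hgdef] using this
  have step5 : (1 / b) ^ (2 * H) * Real.Gamma (2 * H)
      = Real.Gamma (2 * H) * (1 / 2 : ℝ) ^ (2 * H) * (n : ℝ) ^ (-4 * H) := by
    have h1 : (1 / b : ℝ) = (1 / 2) * ((n:ℝ) ^ (2:ℕ))⁻¹ := by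
      rw [hbdef]; field_simp
    have h2 : (((n:ℝ) ^ (2:ℕ))⁻¹) ^ (2 * H) = (n : ℝ) ^ (-4 * H) := by
      rw [← Real.rpow_natCast (n:ℝ) 2, ← Real.rpow_neg hn0.le, ← Real.rpow_mul hn0.le]
      congr 1
      push_cast
      ring
    rw [h1, Real.mul_rpow (by norm_num) (by positivity), h2]
    ring
  have hfinal : (∫ r in (0:ℝ)..s, f r)
      ≤ Real.Gamma (2 * H) * (1 / 2 : ℝ) ^ (2 * H) * (n : ℝ) ^ (-4 * H) := by
    rw [step1, ← step5, ← step4]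
    exact step2.trans step3
  refine hfinal.trans ?_
  have hc : (0:ℝ) ≤ Real.Gamma (2 * H) * (1 / 2 : ℝ) ^ (2 * H) * (n : ℝ) ^ (-4 * H) := by
    have := Real.Gamma_pos_of_pos h2H
    positivity
  nlinarith [hc]
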